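/- arXiv:2212.12888 — 3 statements merged into one kernel-verified Lean document; each statement's English description precedes it below -/
import Mathlib

section
/- Let S ≥ 2 and N ≥ 2 be integers. Then Σ_{s=1}^{S} Σ_{k=1}^{N} k·C(N,k)·φ_s(S,k) = N·S^{N−1}; equivalently, Σ_{k=1}^{N} k·C(N,k)·(g(S,k)+(S−1)·f(S,k)) = N·S^{N−1}. (This is the total number q'' of queries generated by Function 2 of the proposed scheme.) -/
/-- Pair `(g S k, f S k)` defined by the recurrence:
`g(S,1)=1, f(S,1)=0`, and for `k ≥ 2`,
`g(S,k)=(S−1)·f(S,k−1)`, `f(S,k)=(S−2)·f(S,k−1)+g(S,k−1)`. -/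
def gfAux (S : ℕ) : ℕ → ℤ × ℤ
  | 0 => (0, 0)
  | 1 => (1, 0)
  | (k+2) => (((S : ℤ) - 1) * (gfAux S (k+1)).2,
              ((S : ℤ) - 2) * (gfAux S (k+1)).2 + (gfAux S (k+1)).1)

def g (S k : ℕ) : ℤ := (gfAux S k).1
def f (S k : ℕ) : ℤ := (gfAux S k).2

/-- `φ_s(S,k)`: `g(S,k)` if `s = 1`, else `f(S,k)`. -/
def phi (S s k : ℕ) : ℤ := if s = 1 then g S k else f S k

/-- `ψ_s(S,k) = ⌈(k(N−1)/N)·φ_s(S,k)⌉`. -/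
def psi (S N s k : ℕ) : ℤ := ⌈((k : ℚ) * ((N : ℚ) - 1) / (N : ℚ)) * ((phi S s k : ℚ))⌉

/-- `q = Σ_{k=1}^{N} Σ_{s=1}^{S} C(N,k)·ψ_s(S,k)`. -/
def qTotal (S N : ℕ) : ℤ :=
  ∑ k ∈ Finset.Icc 1 N, ∑ s ∈ Finset.Icc 1 S, (N.choose k : ℤ) * psi S N s k

lemma gf_pow (S : ℕ) : ∀ k : ℕ, g S (k+1) + ((S:ℤ)-1) * f S (k+1) = ((S:ℤ)-1)^k := by
  intro k
  induction k with
  | zero => simp [g, f, gfAux]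
  | succ n ih =>
    show (gfAux S (n+2)).1 + ((S:ℤ)-1) * (gfAux S (n+2)).2 = _
    have : (gfAux S (n+2)).1 + ((S:ℤ)-1) * (gfAux S (n+2)).2
        = ((S:ℤ)-1) * ((gfAux S (n+1)).1 + ((S:ℤ)-1) * (gfAux S (n+1)).2) := by
      show ((S : ℤ) - 1) * (gfAux S (n+1)).2 + ((S:ℤ)-1) *
        (((S : ℤ) - 2) * (gfAux S (n+1)).2 + (gfAux S (n+1)).1) = _
      ring
    rw [this]
    show ((S:ℤ)-1) * (g S (n+1) + ((S:ℤ)-1) * f S (n+1)) = _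
    rw [ih, pow_succ]
    ring

lemma sum_core (S N : ℕ) (hN : 1 ≤ N) :
    ∑ k ∈ Finset.Icc 1 N,
        (k : ℤ) * (N.choose k : ℤ) * (g S k + ((S : ℤ) - 1) * f S k)
      = (N : ℤ) * (S : ℤ) ^ (N - 1) := by
  rw [← Finset.Ico_add_one_right_eq_Icc, Finset.sum_Ico_eq_sum_range]
  have hNr : N + 1 - 1 = N := by omega
  rw [hNr]
  have key : ∀ i ∈ Finset.range N,
      ((1 + i : ℕ) : ℤ) * (N.choose (1 + i) : ℤ) *
        (g S (1 + i) + ((S : ℤ) - 1) * f S (1 + i))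
      = (N : ℤ) * (((N - 1).choose i : ℤ) * ((S:ℤ)-1)^i) := by
    intro i _
    have h1 : (1 : ℕ) + i = i + 1 := by omega
    rw [h1, gf_pow]
    have h2 : (i + 1) * N.choose (i + 1) = N * (N - 1).choose i := by
      have h := Nat.add_one_mul_choose_eq (N - 1) i
      change (N - 1 + 1) * (N - 1).choose i = (N - 1 + 1).choose (i + 1) * (i + 1) at h
      rw [show N - 1 + 1 = N from by omega] at h
      rw [mul_comm]; exact h.symm
    have h2' : ((i : ℤ) + 1) * (N.choose (i + 1) : ℤ) = (N : ℤ) * ((N - 1).choose i : ℤ) := by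
      exact_mod_cast congrArg (Nat.cast : ℕ → ℤ) h2
    push_cast
    linear_combination ((S:ℤ)-1)^i * h2'
  rw [Finset.sum_congr rfl key, ← Finset.mul_sum]
  congr 1
  have hr : N = (N - 1) + 1 := by omega
  rw [hr]
  rw [show N - 1 + 1 - 1 = N - 1 from by omega]
  have := add_pow ((S:ℤ)-1) 1 (N-1)
  simp only [one_pow, mul_one] at this
  rw [show ((S:ℤ)-1) + 1 = (S:ℤ) from by ring] at this
  rw [this]
  exact Finset.sum_congr rfl fun i _ => mul_comm _ _

theorem function2_query_count (S N : ℕ) (hS : 2 ≤ S) (hN : 2 ≤ N) :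
    (∑ s ∈ Finset.Icc 1 S, ∑ k ∈ Finset.Icc 1 N,
        (k : ℤ) * (N.choose k : ℤ) * phi S s k = (N : ℤ) * (S : ℤ) ^ (N - 1)) ∧
    (∑ k ∈ Finset.Icc 1 N,
        (k : ℤ) * (N.choose k : ℤ) * (g S k + ((S : ℤ) - 1) * f S k)
      = (N : ℤ) * (S : ℤ) ^ (N - 1)) := by
  have core := sum_core S N (by omega)
  constructor
  · rw [Finset.sum_comm]
    rw [← core]
    refine Finset.sum_congr rfl fun k _ => ?_
    have hsplit : Finset.Icc 1 S = insert 1 (Finset.Icc 2 S) :=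
      (Finset.insert_Icc_add_one_left_eq_Icc (by omega)).symm
    rw [hsplit, Finset.sum_insert (by simp)]
    have : ∀ s ∈ Finset.Icc 2 S, (k : ℤ) * (N.choose k : ℤ) * phi S s k
        = (k : ℤ) * (N.choose k : ℤ) * f S k := by
      intro s hs
      simp only [Finset.mem_Icc] at hs
      have : s ≠ 1 := by omega
      simp [phi, this]
    rw [Finset.sum_congr rfl this, Finset.sum_const, Nat.card_Icc]
    simp only [phi, if_true, eq_self_iff_true]
    have hc : (S + 1 - 2 : ℕ) = S - 1 := by omega
    rw [hc]
    have : ((S - 1 : ℕ) : ℤ) = (S : ℤ) - 1 := by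
      push_cast [Nat.cast_sub (by omega : 1 ≤ S)]; ring
    rw [nsmul_eq_mul, this]
    ring
  · exact core
end

section
/- Let S ≥ 2 and N ≥ 3 be integers and let q = Σ_{k=1}^{N} Σ_{s=1}^{S} C(N,k)·ψ_s(S,k). Then N·S^{N−1} − q > S·(S^{N−2} − 2^{N} + 2) + N·(S−1) + C(N,2), where the inequality is between (possibly negative) integers. -/
lemma gf_nonneg {S : ℕ} (hS : 2 ≤ S) : ∀ k, 0 ≤ g S k ∧ 0 ≤ f S k := by
  have hS' : (2:ℤ) ≤ (S:ℤ) := by exact_mod_cast hS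
  intro k
  induction k using Nat.strong_induction_on with
  | _ k ih =>
    match k with
    | 0 => simp [g, f, gfAux]
    | 1 => simp [g, f, gfAux]
    | (m+2) =>
      obtain ⟨h1, h2⟩ := ih (m+1) (by omega)
      constructor
      · exact mul_nonneg (by linarith) h2
      · exact add_nonneg (mul_nonneg (by linarith) h2) h1

lemma gf_sum {S : ℕ} : ∀ k, g S (k+1) + ((S:ℤ) - 1) * f S (k+1) = ((S:ℤ) - 1) ^ k := by
  intro k
  induction k with
  | zero => simp [g, f, gfAux]
  | succ n ih =>
    have e1 : g S (n+2) = ((S:ℤ) - 1) * f S (n+1) := rfl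
    have e2 : f S (n+2) = ((S:ℤ) - 2) * f S (n+1) + g S (n+1) := rfl
    rw [e1, e2, pow_succ, ← ih]; ring

lemma psi_eq (S N s k : ℕ) (hN : 0 < N) :
    psi S N s k = (k : ℤ) * phi S s k - ((k : ℤ) * phi S s k) / (N : ℤ) := by
  have hN0 : ((N:ℚ)) ≠ 0 := by positivity
  set a : ℤ := (k : ℤ) * phi S s k with ha
  have h1 : ((k : ℚ) * ((N : ℚ) - 1) / (N : ℚ)) * ((phi S s k : ℚ))
      = (a : ℚ) + (-(a:ℚ)) / (N : ℚ) := by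
    push_cast [ha]
    field_simp
    ring
  rw [psi, h1, add_comm, Int.ceil_add_intCast, neg_div, Int.ceil_neg,
    Rat.floor_intCast_div_natCast]
  ring

lemma binom_deriv (x : ℤ) (N : ℕ) (hN : 1 ≤ N) :
    ∑ k ∈ Finset.Icc 1 N, (N.choose k : ℤ) * ((k : ℤ) * x ^ (k-1))
      = (N : ℤ) * (x+1) ^ (N-1) := by
  obtain ⟨M, rfl⟩ : ∃ M, N = M + 1 := ⟨N - 1, by omega⟩
  rw [← Finset.Ico_add_one_right_eq_Icc, Finset.sum_Ico_eq_sum_range]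
  have key : ∀ j, ((M+1).choose (1+j) : ℤ) * ((1+j : ℕ) : ℤ) = (M+1 : ℤ) * (M.choose j : ℤ) := by
    intro j
    have h := Nat.add_one_mul_choose_eq M j
    have : ((M.succ * M.choose j : ℕ) : ℤ) = (((M+1).choose (j+1) * (j+1) : ℕ) : ℤ) := by
      rw [h]
    push_cast at this ⊢
    rw [add_comm 1 j]
    linarith
  have h2 : ∀ j, ((M+1).choose (1+j) : ℤ) * (((1+j : ℕ) : ℤ) * x ^ (1+j-1))
      = (M+1 : ℤ) * ((M.choose j : ℤ) * x ^ j) := by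
    intro j
    have h3 : 1 + j - 1 = j := by omega
    rw [h3, ← mul_assoc, key j, mul_assoc]
  simp only [Nat.add_sub_cancel]
  calc ∑ j ∈ Finset.range (M+1), ((M+1).choose (1+j) : ℤ) * (((1+j : ℕ) : ℤ) * x ^ (1+j-1))
      = ∑ j ∈ Finset.range (M+1), (M+1 : ℤ) * ((M.choose j : ℤ) * x ^ j) := by
        exact Finset.sum_congr rfl (fun j _ => h2 j)
    _ = (M+1 : ℤ) * ∑ j ∈ Finset.range (M+1), x ^ j * 1 ^ (M - j) * (M.choose j : ℤ) := by
        rw [Finset.mul_sum]; exact Finset.sum_congr rfl (fun j _ => by ring)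
    _ = (M+1 : ℤ) * (x+1) ^ M := by rw [← add_pow x 1 M]
    _ = ((M+1 : ℕ) : ℤ) * (x+1) ^ M := by push_cast; ring

lemma split_sum (F : ℕ → ℤ) (N : ℕ) (hN : 3 ≤ N) :
    ∑ k ∈ Finset.Icc 1 N, F k
      = F 1 + F 2 + (∑ k ∈ Finset.Icc 3 (N-1), F k) + F N := by
  obtain ⟨M, rfl⟩ : ∃ M, N = M + 3 := ⟨N - 3, by omega⟩
  rw [← Finset.Ico_add_one_right_eq_Icc]
  rw [Finset.sum_eq_sum_Ico_succ_bot (by omega) F]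
  rw [Finset.sum_eq_sum_Ico_succ_bot (by omega) F]
  rw [Finset.Ico_add_one_right_eq_Icc]
  have h1 : M + 3 = (M + 2) + 1 := rfl
  rw [h1, Finset.sum_Icc_succ_top (by omega) F]
  have h2 : M + 2 + 1 - 1 = M + 2 := rfl
  rw [h2]
  ring

lemma choose_sum (N : ℕ) : ∑ k ∈ Finset.Icc 0 N, (N.choose k : ℤ) = 2 ^ N := by
  have := Nat.sum_range_choose N
  have h : ∑ k ∈ Finset.Icc 0 N, (N.choose k : ℤ)
      = ((∑ k ∈ Finset.range (N+1), N.choose k : ℕ) : ℤ) := by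
    push_cast
    rw [Finset.range_eq_Ico, ← Finset.Ico_add_one_right_eq_Icc]
  rw [h, this]; push_cast; ring

lemma ediv_lb (a : ℤ) (N : ℕ) (hN : 0 < N) : a - ((N:ℤ) - 1) ≤ (N:ℤ) * (a / (N:ℤ)) := by
  have hN' : (0:ℤ) < (N:ℤ) := by exact_mod_cast hN
  have h1 := Int.emod_lt_of_pos a hN'
  have h2 := Int.mul_ediv_add_emod a (N:ℤ)
  omega

lemma pow_lb (N : ℕ) (hN : 3 ≤ N) : (N:ℤ) + 3 ≤ 2 ^ N := by
  have : N + 3 ≤ 2 ^ N := by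
    induction N with
    | zero => omega
    | succ n ih =>
      rcases Nat.lt_or_ge n 3 with h | h
      · interval_cases n <;> simp_all
      · have := ih (by omega); rw [pow_succ]; omega
  exact_mod_cast this


lemma final_arith (S N c P Q X SG x : ℤ) (hx : x = S - 1)
    (hS2 : 2 ≤ S) (hN3 : 3 ≤ N) (h2c : 2 * c = N * (N - 1)) (hc0 : 0 ≤ c)
    (hP : N + 3 ≤ P)
    (hmid : N * (S * Q) - N - c * (2 * x) - N * X - (x + 1) * (N - 1) * (P - 2 - N - c) ≤ SG) :
    N * (S * (Q - P + 2) + N * (S - 1) + c) < 0 + 0 + SG + N * X := by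
  subst hx
  have e1 : 2 * (c * (N - 1)) = N * ((N - 1) * (N - 1)) := by
    linear_combination (N - 1) * h2c
  have hcube : 0 ≤ N ^ 3 - 4 * N ^ 2 + 3 * N + 2 := by
    have t1 : 0 ≤ N * (N - 3) ^ 2 := mul_nonneg (by linarith) (sq_nonneg _)
    have t2 : 0 ≤ (N - 3) * N := mul_nonneg (by linarith) (by linarith)
    nlinarith [t1, t2]
  have ha : 0 ≤ P - 2 + c * (N - 1) - N ^ 2 := by nlinarith [hcube, hP, e1]
  have hkey : 0 < S * (P - 2 + c * (N - 1) - N ^ 2) + N * (2 * N - 2 - c) := by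
    have hSa : 2 * (P - 2 + c * (N - 1) - N ^ 2)
        ≤ S * (P - 2 + c * (N - 1) - N ^ 2) :=
      mul_le_mul_of_nonneg_right hS2 ha
    have hcN2 : 0 ≤ c * (N - 2) := mul_nonneg hc0 (by linarith)
    nlinarith [hSa, hcN2, hP]
  nlinarith [hmid, hkey]

theorem q_bound_N_ge_three (S N : ℕ) (hS : 2 ≤ S) (hN : 3 ≤ N) :
    (S : ℤ) * ((S : ℤ) ^ (N - 2) - 2 ^ N + 2) + (N : ℤ) * ((S : ℤ) - 1)
        + (N.choose 2 : ℤ)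
      < (N : ℤ) * (S : ℤ) ^ (N - 1) - qTotal S N := by
  have hN0 : 0 < N := by omega
  have hNZ : (0:ℤ) < (N:ℤ) := by exact_mod_cast hN0
  have hN3 : (3:ℤ) ≤ (N:ℤ) := by exact_mod_cast hN
  have hS2 : (2:ℤ) ≤ (S:ℤ) := by exact_mod_cast hS
  set x : ℤ := (S:ℤ) - 1 with hx
  have hx1 : (1:ℤ) ≤ x := by omega
  have hg1 : g S 1 = 1 := rfl
  have hf1 : f S 1 = 0 := rfl
  have hg2 : g S 2 = 0 := by
    show ((S:ℤ) - 1) * (gfAux S 1).2 = 0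
    simp [gfAux]
  have hf2 : f S 2 = 1 := by
    show ((S:ℤ) - 2) * (gfAux S 1).2 + (gfAux S 1).1 = 1
    simp [gfAux]
  set D : ℕ → ℤ := fun k =>
    ((k:ℤ) * g S k) / (N:ℤ) + x * (((k:ℤ) * f S k) / (N:ℤ)) with hD
  -- inner sum over s
  have hphi1 : ∀ k, phi S 1 k = g S k := by intro k; simp [phi]
  have hphi2 : ∀ k, phi S 2 k = f S k := by intro k; simp [phi]
  have inner : ∀ k, 1 ≤ k →
      ∑ s ∈ Finset.Icc 1 S, (N.choose k : ℤ) * psi S N s k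
        = (N.choose k : ℤ) * ((k:ℤ) * x ^ (k-1)) - (N.choose k : ℤ) * D k := by
    intro k hk
    have hsum : ∑ s ∈ Finset.Icc 1 S, psi S N s k
        = psi S N 1 k + x * psi S N 2 k := by
      rw [← Finset.Ico_add_one_right_eq_Icc, Finset.sum_eq_sum_Ico_succ_bot (by omega) (fun s => psi S N s k)]
      congr 1
      have hconst : ∀ s ∈ Finset.Ico 2 (S+1), psi S N s k = psi S N 2 k := by
        intro s hs
        simp only [Finset.mem_Ico] at hs
        have h1 : phi S s k = phi S 2 k := by
          simp [phi]
          intro h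
          omega
        simp [psi, h1]
      rw [Finset.sum_congr rfl hconst, Finset.sum_const, Nat.card_Ico, nsmul_eq_mul]
      have : ((S + 1 - 2 : ℕ) : ℤ) = x := by
        rw [hx]; omega
      rw [this]
    rw [← Finset.mul_sum, hsum, psi_eq S N 1 k hN0, psi_eq S N 2 k hN0, hphi1, hphi2]
    have hgf : g S k + x * f S k = x ^ (k-1) := by
      obtain ⟨m, rfl⟩ : ∃ m, k = m + 1 := ⟨k - 1, by omega⟩
      simpa using gf_sum (S := S) m
    have : (k:ℤ) * g S k - ((k:ℤ) * g S k) / (N:ℤ)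
          + x * ((k:ℤ) * f S k - ((k:ℤ) * f S k) / (N:ℤ))
        = (k:ℤ) * x ^ (k-1) - D k := by
      rw [hD]
      have : (k:ℤ) * g S k + x * ((k:ℤ) * f S k) = (k:ℤ) * x ^ (k-1) := by
        rw [← hgf]; ring
      simp only []
      linarith [this]
    rw [this, mul_sub]
  -- rewrite qTotal
  set R : ℤ := ∑ k ∈ Finset.Icc 1 N, (N.choose k : ℤ) * D k with hR
  have hxS : x + 1 = (S:ℤ) := by omega
  have hq : qTotal S N = (N:ℤ) * (S:ℤ) ^ (N-1) - R := by
    have e1 : qTotal S N = ∑ k ∈ Finset.Icc 1 N,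
        ((N.choose k : ℤ) * ((k:ℤ) * x ^ (k-1)) - (N.choose k : ℤ) * D k) := by
      rw [qTotal]
      apply Finset.sum_congr rfl
      intro k hk
      simp only [Finset.mem_Icc] at hk
      exact inner k hk.1
    rw [e1, Finset.sum_sub_distrib, binom_deriv x N (by omega), hxS, hR]
  rw [hq]
  have hgoal : ∀ T : ℤ, (N:ℤ) * T < (N:ℤ) * R → T < R := by
    intro T h
    exact lt_of_mul_lt_mul_left h (le_of_lt hNZ)
  have key2 : (N:ℤ) * (S:ℤ) ^ (N-1) - ((N:ℤ) * (S:ℤ) ^ (N-1) - R) = R := by ring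
  rw [key2]
  apply hgoal
  -- N * R as a sum
  have hNR : (N:ℤ) * R = ∑ k ∈ Finset.Icc 1 N, (N.choose k : ℤ) * ((N:ℤ) * D k) := by
    rw [hR, Finset.mul_sum]
    exact Finset.sum_congr rfl (fun k _ => by ring)
  set G : ℕ → ℤ := fun k => (N.choose k : ℤ) * ((N:ℤ) * D k) with hG
  have hsplit : (N:ℤ) * R = G 1 + G 2 + (∑ k ∈ Finset.Icc 3 (N-1), G k) + G N := by
    rw [hNR, split_sum G N hN]
  -- exact small/top values
  have hdiv1 : (1:ℤ) / (N:ℤ) = 0 := Int.ediv_eq_zero_of_lt (by omega) (by omega)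
  have hdiv2 : (2:ℤ) / (N:ℤ) = 0 := Int.ediv_eq_zero_of_lt (by omega) (by omega)
  have hG1 : G 1 = 0 := by
    have : D 1 = 0 := by
      rw [hD]; simp only [Nat.cast_one, one_mul, hg1, hf1, mul_zero]
      rw [hdiv1]
      simp [Int.zero_ediv]
    rw [hG]; simp [this]
  have hG2 : G 2 = 0 := by
    have : D 2 = 0 := by
      rw [hD]; simp only [hg2, hf2, mul_zero, mul_one, Nat.cast_ofNat]
      rw [hdiv2]
      simp [Int.zero_ediv]
    rw [hG]; simp [this]
  have hGN : G N = (N:ℤ) * x ^ (N-1) := by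
    have hDN : D N = x ^ (N-1) := by
      rw [hD]
      simp only []
      rw [Int.mul_ediv_cancel_left _ (by omega : (N:ℤ) ≠ 0),
          Int.mul_ediv_cancel_left _ (by omega : (N:ℤ) ≠ 0)]
      obtain ⟨m, hm⟩ : ∃ m, N = m + 1 := ⟨N - 1, by omega⟩
      rw [hm]
      simpa using gf_sum (S := S) m
    have e : G N = (N.choose N : ℤ) * ((N:ℤ) * D N) := rfl
    rw [e, hDN, Nat.choose_self]
    simp
  -- lower bound on middle terms
  have hmid : ∀ k ∈ Finset.Icc 3 (N-1),
      (N.choose k : ℤ) * ((k:ℤ) * x ^ (k-1)) - (N.choose k : ℤ) * ((x+1) * ((N:ℤ)-1))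
        ≤ G k := by
    intro k hk
    simp only [Finset.mem_Icc] at hk
    have hgf : g S k + x * f S k = x ^ (k-1) := by
      obtain ⟨m, rfl⟩ : ∃ m, k = m + 1 := ⟨k - 1, by omega⟩
      simpa using gf_sum (S := S) m
    have l1 := ediv_lb ((k:ℤ) * g S k) N hN0
    have l2 := ediv_lb ((k:ℤ) * f S k) N hN0
    have l2' : x * ((k:ℤ) * f S k - ((N:ℤ) - 1))
        ≤ x * ((N:ℤ) * (((k:ℤ) * f S k) / (N:ℤ))) :=
      mul_le_mul_of_nonneg_left l2 (by omega)
    have hND : (k:ℤ) * x ^ (k-1) - (x+1) * ((N:ℤ)-1) ≤ (N:ℤ) * D k := by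
      rw [hD]
      simp only []
      have expand : (N:ℤ) * (((k:ℤ) * g S k) / (N:ℤ) + x * (((k:ℤ) * f S k) / (N:ℤ)))
          = (N:ℤ) * (((k:ℤ) * g S k) / (N:ℤ)) + x * ((N:ℤ) * (((k:ℤ) * f S k) / (N:ℤ))) := by
        ring
      rw [expand]
      have : (k:ℤ) * x ^ (k-1) = (k:ℤ) * g S k + x * ((k:ℤ) * f S k) := by
        rw [← hgf]; ring
      nlinarith [l1, l2']
    calc (N.choose k : ℤ) * ((k:ℤ) * x ^ (k-1)) - (N.choose k : ℤ) * ((x+1) * ((N:ℤ)-1))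
        = (N.choose k : ℤ) * ((k:ℤ) * x ^ (k-1) - (x+1) * ((N:ℤ)-1)) := by ring
      _ ≤ (N.choose k : ℤ) * ((N:ℤ) * D k) :=
          mul_le_mul_of_nonneg_left hND (by positivity)
  -- sums of middle bounds
  have hmidsum : ∑ k ∈ Finset.Icc 3 (N-1),
        ((N.choose k : ℤ) * ((k:ℤ) * x ^ (k-1)) - (N.choose k : ℤ) * ((x+1) * ((N:ℤ)-1)))
      ≤ ∑ k ∈ Finset.Icc 3 (N-1), G k :=
    Finset.sum_le_sum hmid
  -- exact values of the two middle sums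
  have hFsum : ∑ k ∈ Finset.Icc 3 (N-1), (N.choose k : ℤ) * ((k:ℤ) * x ^ (k-1))
      = (N:ℤ) * (S:ℤ) ^ (N-1) - (N:ℤ) - (N.choose 2 : ℤ) * (2 * x) - (N:ℤ) * x ^ (N-1) := by
    have h := split_sum (fun k => (N.choose k : ℤ) * ((k:ℤ) * x ^ (k-1))) N hN
    rw [binom_deriv x N (by omega), hxS] at h
    simp only [Nat.choose_one_right, Nat.choose_self, Nat.cast_one, pow_zero,
      Nat.cast_ofNat] at h
    push_cast at h
    linarith [h]
  have hCsum : ∑ k ∈ Finset.Icc 3 (N-1), (N.choose k : ℤ)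
      = 2 ^ N - 2 - (N:ℤ) - (N.choose 2 : ℤ) := by
    have h := split_sum (fun k => (N.choose k : ℤ)) N hN
    have h0 : ∑ k ∈ Finset.Icc 1 N, (N.choose k : ℤ) = 2 ^ N - 1 := by
      have := choose_sum N
      rw [← Finset.Ico_add_one_right_eq_Icc, Finset.sum_eq_sum_Ico_succ_bot (by omega)
        (fun k => (N.choose k : ℤ)), Finset.Ico_add_one_right_eq_Icc] at this
      simp only [Nat.choose_zero_right, Nat.cast_one] at this
      have e : Finset.Icc 0 N = Finset.Icc 0 (0+1-1) ∪ Finset.Icc 1 N := by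
        ext a; simp; omega
      linarith [this]
    rw [h0] at h
    simp only [Nat.choose_one_right, Nat.choose_self, Nat.cast_one] at h
    linarith [h]
  have hmidsum2 : (N:ℤ) * (S:ℤ) ^ (N-1) - (N:ℤ) - (N.choose 2 : ℤ) * (2 * x)
        - (N:ℤ) * x ^ (N-1)
        - (x+1) * ((N:ℤ)-1) * (2 ^ N - 2 - (N:ℤ) - (N.choose 2 : ℤ))
      ≤ ∑ k ∈ Finset.Icc 3 (N-1), G k := by
    have e : ∑ k ∈ Finset.Icc 3 (N-1),
        ((N.choose k : ℤ) * ((k:ℤ) * x ^ (k-1)) - (N.choose k : ℤ) * ((x+1) * ((N:ℤ)-1)))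
        = (∑ k ∈ Finset.Icc 3 (N-1), (N.choose k : ℤ) * ((k:ℤ) * x ^ (k-1)))
          - (x+1) * ((N:ℤ)-1) * ∑ k ∈ Finset.Icc 3 (N-1), (N.choose k : ℤ) := by
      rw [Finset.mul_sum, ← Finset.sum_sub_distrib]
      exact Finset.sum_congr rfl (fun k _ => by ring)
    rw [e, hFsum, hCsum] at hmidsum
    linarith [hmidsum]
  -- final arithmetic
  set c : ℤ := (N.choose 2 : ℤ) with hc
  have h2c : 2 * c = (N:ℤ) * ((N:ℤ) - 1) := by
    rw [hc]
    have h1 : N.choose 2 = N * (N-1) / 2 := Nat.choose_two_right N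
    have h2 : 2 ∣ N * (N - 1) := by
      rcases Nat.even_or_odd N with he | ho
      · exact Dvd.dvd.mul_right he.two_dvd _
      · exact Dvd.dvd.mul_left (Nat.Odd.sub_odd ho odd_one).two_dvd _
    have h3 : (2 * (N * (N-1) / 2) : ℕ) = N * (N - 1) := Nat.mul_div_cancel' h2
    have h4 : ((2 * N.choose 2 : ℕ) : ℤ) = ((N * (N-1) : ℕ) : ℤ) := by
      rw [h1, h3]
    push_cast at h4
    rw [Nat.cast_sub (by omega)] at h4
    push_cast at h4
    linarith [h4]
  have hc0 : 0 ≤ c := by rw [hc]; positivity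
  have hP := pow_lb N hN
  have hpow : (S:ℤ) ^ (N-1) = (S:ℤ) * (S:ℤ) ^ (N-2) := by
    obtain ⟨m, hm⟩ : ∃ m, N = m + 2 := ⟨N - 2, by omega⟩
    subst hm
    simp only [Nat.add_sub_cancel]
    have : m + 2 - 1 = m + 1 := by omega
    rw [this, pow_succ]
    ring
  have hpowN : (N:ℤ) * (S:ℤ)^(N-1) = (N:ℤ) * ((S:ℤ) * (S:ℤ)^(N-2)) := by
    rw [hpow]
  rw [hpowN] at hmidsum2
  rw [hsplit, hG1, hG2, hGN]
  exact final_arith (S:ℤ) (N:ℤ) c (2^N) ((S:ℤ)^(N-2)) (x^(N-1))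
    (∑ k ∈ Finset.Icc 3 (N-1), G k) x hx hS2 hN3 h2c hc0 hP hmidsum2
end

section
/- (Lemma 4.2, case N < K) Let S ≥ 2 and integers 2 ≤ N < K be given, let q = Σ_{k=1}^{N} Σ_{s=1}^{S} C(N,k)·ψ_s(S,k), let M = (N·S^{N−1} − q)/(K·S^{N−1}), and let R = (N/K)·( q/S^{N−1} + K − N ). Then for every t ∈ {1,…,K}, with R_t = min( N·(1 − t/K), ((K−t)/(t+1))·Σ_{i=0}^{N−1} S^{−i} ), one has N − (K/(tN))·(N − R_t)·M > R; that is, the memory–rate point (M,R) of the proposed scheme lies strictly below the line through (0,N) and (tN/K, R_t). -/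
lemma fg_nonneg (S : ℕ) (hS : 2 ≤ S) : ∀ k, 0 ≤ f S k ∧ 0 ≤ g S k := by
  intro k
  induction k using Nat.strong_induction_on with
  | _ k ih =>
    match k with
    | 0 => exact ⟨le_refl 0, le_refl 0⟩
    | 1 => simp [f, g, gfAux]
    | (k+2) =>
      obtain ⟨hf, hg⟩ := ih (k+1) (by omega)
      have hS2 : (0:ℤ) ≤ (S:ℤ) - 2 := by
        have : (2:ℤ) ≤ (S:ℤ) := by exact_mod_cast hS
        omega
      constructor
      · show 0 ≤ ((S : ℤ) - 2) * (gfAux S (k+1)).2 + (gfAux S (k+1)).1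
        have := mul_nonneg hS2 hf
        exact add_nonneg this hg
      · show 0 ≤ ((S : ℤ) - 1) * (gfAux S (k+1)).2
        exact mul_nonneg (by omega) hf

lemma h_eq (S : ℕ) : ∀ k, g S (k+1) + ((S:ℤ) - 1) * f S (k+1) = ((S:ℤ) - 1) ^ k := by
  intro k
  induction k with
  | zero => simp [g, f, gfAux]
  | succ k ih =>
    show ((S : ℤ) - 1) * (gfAux S (k+1)).2 + ((S:ℤ)-1) * (((S : ℤ) - 2) * (gfAux S (k+1)).2 + (gfAux S (k+1)).1) = _
    rw [pow_succ, ← ih]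
    show _ = (g S (k+1) + ((S:ℤ) - 1) * f S (k+1)) * ((S:ℤ)-1)
    unfold g f
    ring

lemma key_id (N : ℕ) (hN : 1 ≤ N) (x : ℤ) :
    ∑ k ∈ Finset.Icc 1 N, (N.choose k : ℤ) * k * x^(k-1) = N * (x+1)^(N-1) := by
  rw [← Finset.Ico_add_one_right_eq_Icc, Finset.sum_Ico_eq_sum_range]
  simp only [Nat.add_sub_cancel]
  have hN1 : N - 1 + 1 = N := by omega
  have h1 : ∀ i ∈ Finset.range N, (N.choose (1+i) : ℤ) * ((1+i : ℕ) : ℤ) * x^(1+i-1)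
      = (N:ℤ) * ((N-1).choose i) * x^i := by
    intro i _
    have hh := Nat.add_one_mul_choose_eq (N-1) i
    rw [hN1] at hh
    have h2 : (N : ℤ) * ((N-1).choose i : ℤ) = (N.choose (i+1) : ℤ) * (i+1) := by
      exact_mod_cast congrArg (Nat.cast : ℕ → ℤ) hh
    have h3 : 1 + i - 1 = i := by omega
    rw [h3, h2, Nat.add_comm 1 i]
    push_cast
    ring
  rw [Finset.sum_congr rfl h1]
  have hb := add_pow x 1 (N-1)
  simp only [one_pow, mul_one] at hb
  rw [hb, Finset.mul_sum, hN1]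
  exact Finset.sum_congr rfl (fun i _ => by ring)




lemma phi_nonneg (S s k : ℕ) (hS : 2 ≤ S) : 0 ≤ phi S s k := by
  unfold phi
  split
  · exact (fg_nonneg S hS k).2
  · exact (fg_nonneg S hS k).1

lemma psi_le (S N s k : ℕ) (hN : 1 ≤ N) (hS : 2 ≤ S) :
    psi S N s k ≤ k * phi S s k := by
  have hφ := phi_nonneg S s k hS
  have hφq : (0:ℚ) ≤ (phi S s k : ℚ) := by exact_mod_cast hφ
  apply Int.ceil_le.mpr
  push_cast
  have hNq : (0:ℚ) < (N:ℚ) := by exact_mod_cast hN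
  have h1 : (k : ℚ) * ((N : ℚ) - 1) / (N : ℚ) ≤ (k : ℚ) := by
    rw [div_le_iff₀ hNq]
    have : ((N:ℚ) - 1) ≤ (N:ℚ) := by linarith
    nlinarith [Nat.cast_nonneg (α := ℚ) k]
  exact mul_le_mul_of_nonneg_right h1 hφq

lemma psi_top (S N s : ℕ) (hN : 1 ≤ N) :
    psi S N s N = ((N:ℤ) - 1) * phi S s N := by
  unfold psi
  have hNq : (N:ℚ) ≠ 0 := by positivity
  have h1 : (N : ℚ) * ((N : ℚ) - 1) / (N : ℚ) = (N:ℚ) - 1 := by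
    field_simp
  rw [h1, show ((N:ℚ) - 1) * ((phi S s N : ℤ) : ℚ) = ((((N:ℤ) - 1) * phi S s N : ℤ) : ℚ) by
    push_cast; ring, Int.ceil_intCast]

lemma sum_phi (S k : ℕ) (hS : 1 ≤ S) :
    ∑ s ∈ Finset.Icc 1 S, phi S s k = g S k + ((S:ℤ) - 1) * f S k := by
  have hins : Finset.Icc 1 S = insert 1 (Finset.Icc 2 S) := by
    ext s; simp only [Finset.mem_Icc, Finset.mem_insert]; omega
  rw [hins, Finset.sum_insert (by simp)]
  have h2 : ∀ s ∈ Finset.Icc 2 S, phi S s k = f S k := by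
    intro s hs
    have hs1 : s ≠ 1 := by simp only [Finset.mem_Icc] at hs; omega
    simp [phi, hs1]
  rw [Finset.sum_congr rfl h2, Finset.sum_const, Nat.card_Icc]
  have hc : S + 1 - 2 = S - 1 := by omega
  have hcast : ((S - 1 : ℕ) : ℤ) = (S:ℤ) - 1 := by
    push_cast [Nat.cast_sub hS]; ring
  rw [hc, nsmul_eq_mul, hcast]
  simp [phi]

lemma q_bound (S N : ℕ) (hS : 2 ≤ S) (hN : 2 ≤ N) :
    qTotal S N ≤ (N:ℤ) * (S:ℤ)^(N-1) - ((S:ℤ)-1)^(N-1) := by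
  set x : ℤ := (S:ℤ) - 1 with hx
  have hS1 : 1 ≤ S := by omega
  have e : Finset.Icc 1 N = Finset.Icc 1 ((N-1)+1) := by rw [show N-1+1 = N by omega]
  have hinner : ∀ k, 1 ≤ k →
      ∑ s ∈ Finset.Icc 1 S, (N.choose k : ℤ) * psi S N s k
        ≤ (N.choose k : ℤ) * k * x^(k-1) := by
    intro k hk
    have hsum : ∑ s ∈ Finset.Icc 1 S, (N.choose k : ℤ) * psi S N s k
        ≤ ∑ s ∈ Finset.Icc 1 S, (N.choose k : ℤ) * (k * phi S s k) := by
      apply Finset.sum_le_sum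
      intro s _
      exact mul_le_mul_of_nonneg_left (psi_le S N s k (by omega) hS) (by positivity)
    refine hsum.trans_eq ?_
    rw [← Finset.mul_sum, ← Finset.mul_sum, sum_phi S k hS1]
    have hk1 : k - 1 + 1 = k := by omega
    have hh := h_eq S (k-1); rw [hk1] at hh
    rw [hh]; ring
  have htop : ∑ s ∈ Finset.Icc 1 S, (N.choose N : ℤ) * psi S N s N
      = ((N:ℤ)-1) * x^(N-1) := by
    simp only [Nat.choose_self, Nat.cast_one, one_mul]
    rw [Finset.sum_congr rfl (fun s _ => psi_top S N s (by omega)), ← Finset.mul_sum,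
      sum_phi S N hS1]
    have hk1 : N - 1 + 1 = N := by omega
    have hh := h_eq S (N-1); rw [hk1] at hh
    rw [hh]
  have hsplit : qTotal S N
      = (∑ k ∈ Finset.Icc 1 (N-1), ∑ s ∈ Finset.Icc 1 S, (N.choose k:ℤ) * psi S N s k)
        + ∑ s ∈ Finset.Icc 1 S, (N.choose N:ℤ) * psi S N s N := by
    rw [qTotal, e, Finset.sum_Icc_succ_top (by omega), show N-1+1=N by omega]
  have h1 : (∑ k ∈ Finset.Icc 1 (N-1), ∑ s ∈ Finset.Icc 1 S, (N.choose k:ℤ) * psi S N s k)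
      ≤ ∑ k ∈ Finset.Icc 1 (N-1), (N.choose k:ℤ) * k * x^(k-1) := by
    apply Finset.sum_le_sum
    intro k hk
    exact hinner k (Finset.mem_Icc.mp hk).1
  have h2 : ∑ k ∈ Finset.Icc 1 (N-1), (N.choose k:ℤ) * k * x^(k-1)
      = (N:ℤ) * (S:ℤ)^(N-1) - (N:ℤ) * x^(N-1) := by
    have hkey := key_id N (by omega) x
    rw [e, Finset.sum_Icc_succ_top (by omega), show N-1+1=N by omega, Nat.choose_self] at hkey
    have hxS : x + 1 = (S:ℤ) := by rw [hx]; ring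
    rw [hxS] at hkey
    push_cast at hkey ⊢
    linarith
  rw [hsplit, htop]
  linarith [h1, h2]

lemma q_lt (S N : ℕ) (hS : 2 ≤ S) (hN : 2 ≤ N) :
    qTotal S N < (N:ℤ) * (S:ℤ)^(N-1) := by
  have h1 := q_bound S N hS hN
  have hx : (1:ℤ) ≤ ((S:ℤ)-1) := by
    have : (2:ℤ) ≤ (S:ℤ) := by exact_mod_cast hS
    omega
  have h2 : (1:ℤ) ≤ ((S:ℤ)-1)^(N-1) := one_le_pow₀ hx
  linarith

lemma aux_ineq (n k a : ℚ) (hn : 2 ≤ n) (ha : 1 ≤ a) (hk : n + 1 ≤ k) (hak : a ≤ k) :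
    k * (n*(a+1) - (k - a)) < a*n^2*(a+1) := by
  nlinarith [sq_nonneg (2*k - n*(a+1) - a), mul_nonneg (sub_nonneg.2 hn) (sub_nonneg.2 ha),
    sq_nonneg (n-2), sq_nonneg (a-1), mul_pos (by linarith : (0:ℚ) < n) (by linarith : (0:ℚ) < a),
    mul_nonneg (mul_nonneg (sub_nonneg.2 hn) (sub_nonneg.2 ha)) (by linarith : (0:ℚ) ≤ a+1),
    mul_nonneg (mul_nonneg (sub_nonneg.2 hn) (by linarith : (0:ℚ) ≤ a+1)) (by linarith : (0:ℚ) ≤ n)]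


set_option maxHeartbeats 1000000 in
theorem lemma4_2_N_lt_K (S N K : ℕ) (hS : 2 ≤ S) (hN : 2 ≤ N) (hNK : N < K)
    (t : ℕ) (ht : t ∈ Finset.Icc 1 K) :
    let q : ℚ := (qTotal S N : ℚ)
    let M : ℚ := ((N : ℚ) * (S : ℚ) ^ (N - 1) - q) / ((K : ℚ) * (S : ℚ) ^ (N - 1))
    let R : ℚ := ((N : ℚ) / (K : ℚ)) * (q / (S : ℚ) ^ (N - 1) + (K : ℚ) - (N : ℚ))
    let Rt : ℚ := min ((N : ℚ) * (1 - (t : ℚ) / (K : ℚ)))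
      ((((K : ℚ) - (t : ℚ)) / ((t : ℚ) + 1)) * ∑ i ∈ Finset.range N, ((S : ℚ) ^ i)⁻¹)
    (N : ℚ) - ((K : ℚ) / ((t : ℚ) * (N : ℚ))) * ((N : ℚ) - Rt) * M > R := by
  obtain ⟨ht1, ht2⟩ := Finset.mem_Icc.mp ht
  intro q M R Rt
  have hS0 : (0:ℚ) < (S:ℚ) := by exact_mod_cast (by omega : 0 < S)
  have hP : (0:ℚ) < (S:ℚ)^(N-1) := by positivity
  have hK0 : (0:ℚ) < (K:ℚ) := by exact_mod_cast (by omega : 0 < K)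
  have ht0 : (0:ℚ) < (t:ℚ) := by exact_mod_cast (by omega : 0 < t)
  have hN0 : (0:ℚ) < (N:ℚ) := by exact_mod_cast (by omega : 0 < N)
  have hN2 : (2:ℚ) ≤ (N:ℚ) := by exact_mod_cast hN
  have htK : (t:ℚ) ≤ (K:ℚ) := by exact_mod_cast ht2
  have hNKq : (N:ℚ) + 1 ≤ (K:ℚ) := by exact_mod_cast (by omega : N + 1 ≤ K)
  have ht1q : (1:ℚ) ≤ (t:ℚ) := by exact_mod_cast ht1
  have hq : q < (N:ℚ) * (S:ℚ)^(N-1) := by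
    have h := q_lt S N hS hN
    show ((qTotal S N : ℤ):ℚ) < _
    exact_mod_cast h
  have hM : 0 < M := div_pos (by linarith) (by positivity)
  have hNR : (N:ℚ) - R = (N:ℚ) * M := by
    show (N:ℚ) - ((N : ℚ) / (K : ℚ)) * (q / (S : ℚ) ^ (N - 1) + (K : ℚ) - (N : ℚ))
      = (N:ℚ) * (((N : ℚ) * (S : ℚ) ^ (N - 1) - q) / ((K : ℚ) * (S : ℚ) ^ (N - 1)))
    field_simp
    ring
  have hkey : (K:ℚ) * ((N:ℚ) - Rt) < (t:ℚ) * (N:ℚ)^2 := by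
    have hSum : (1:ℚ) ≤ ∑ i ∈ Finset.range N, ((S : ℚ) ^ i)⁻¹ := by
      have h0 : (((S:ℚ)^0)⁻¹ : ℚ) = 1 := by simp
      calc (1:ℚ) = ((S:ℚ)^0)⁻¹ := h0.symm
        _ ≤ _ := Finset.single_le_sum (f := fun i => ((S:ℚ)^i)⁻¹)
            (fun i _ => by positivity) (Finset.mem_range.mpr (by omega))
    rcases min_cases ((N : ℚ) * (1 - (t : ℚ) / (K : ℚ)))
      ((((K : ℚ) - (t : ℚ)) / ((t : ℚ) + 1)) * ∑ i ∈ Finset.range N, ((S : ℚ) ^ i)⁻¹) with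
      ⟨hmin, _⟩ | ⟨hmin, _⟩
    · have : Rt = (N : ℚ) * (1 - (t : ℚ) / (K : ℚ)) := hmin
      rw [this]
      have : (K:ℚ) * ((N:ℚ) - (N : ℚ) * (1 - (t : ℚ) / (K : ℚ))) = (N:ℚ) * (t:ℚ) := by
        field_simp; ring
      rw [this]
      nlinarith [mul_pos ht0 hN0]
    · have hRt : Rt = (((K : ℚ) - (t : ℚ)) / ((t : ℚ) + 1)) * ∑ i ∈ Finset.range N, ((S : ℚ) ^ i)⁻¹ :=
        hmin
      rw [hRt]
      have ht1' : (0:ℚ) < (t:ℚ) + 1 := by linarith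
      have hb : ((K : ℚ) - (t : ℚ)) / ((t : ℚ) + 1)
          ≤ (((K : ℚ) - (t : ℚ)) / ((t : ℚ) + 1)) * ∑ i ∈ Finset.range N, ((S : ℚ) ^ i)⁻¹ := by
        nlinarith [div_nonneg (by linarith : (0:ℚ) ≤ (K:ℚ) - (t:ℚ)) (le_of_lt ht1')]
      have hstep : (K:ℚ) * ((N:ℚ) - ((K : ℚ) - (t : ℚ)) / ((t : ℚ) + 1)) < (t:ℚ) * (N:ℚ)^2 := by
        rw [show (N:ℚ) - ((K : ℚ) - (t : ℚ)) / ((t : ℚ) + 1)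
            = ((N:ℚ)*((t:ℚ)+1) - ((K:ℚ) - (t:ℚ))) / ((t:ℚ)+1) by field_simp]
        rw [← mul_div_assoc, div_lt_iff₀ ht1']
        have := aux_ineq (N:ℚ) (K:ℚ) (t:ℚ) hN2 ht1q hNKq htK
        nlinarith [this]
      calc (K:ℚ) * ((N:ℚ) - (((K : ℚ) - (t : ℚ)) / ((t : ℚ) + 1)) * ∑ i ∈ Finset.range N, ((S : ℚ) ^ i)⁻¹)
          ≤ (K:ℚ) * ((N:ℚ) - ((K : ℚ) - (t : ℚ)) / ((t : ℚ) + 1)) := by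
            apply mul_le_mul_of_nonneg_left _ (le_of_lt hK0)
            linarith
        _ < (t:ℚ) * (N:ℚ)^2 := hstep
  have hfin : ((K : ℚ) / ((t : ℚ) * (N : ℚ))) * ((N : ℚ) - Rt) < (N:ℚ) := by
    rw [div_mul_eq_mul_div, div_lt_iff₀ (by positivity)]
    nlinarith [hkey]
  have := mul_lt_mul_of_pos_right hfin hM
  linarith [hNR, this]
end
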